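/- Let G = (V,E) be a finite simple graph and let n, x > 0 be real numbers. Define π on S(G) by π(A,u,v) = d_u d_v n^{c(A)} x^{|A|}, where d_u, d_v are the degrees of u,v in G and c(A) = |A| − |V| + k(A) with k(A) the number of connected components of the spanning subgraph (V,A). Define a matrix P on S(G) whose only nonzero off-diagonal entries are, for uu' ∈ E and v ∈ V: P[(A,u,v) → (A △ uu', u', v)] = P[(A,v,u) → (A △ uu', v, u')] = (1/(2 d_u)) · m, where m = min(1, x n) if uu' ∉ A and u,u' are connected in (V,A); m = min(1, x) if uu' ∉ A and u,u' are not connected in (V,A); m = min(1, 1/(n x)) if uu' ∈ A and u,u' are connected in (V, A ∖ {uu'}); and m = min(1, 1/x) if uu' ∈ A and u,u' are not connected in (V, A ∖ {uu'}); diagonal entries are fixed so each row of P sums to 1. Then P is a stochastic matrix in detailed balance with π: π(s) P[s → s'] = π(s') P[s' → s] for all s, s' ∈ S(G). -/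

import Mathlib

open Finset

attribute [local instance] Classical.propDecidable

set_option linter.unusedSectionVars false

section AuxGraph
open SimpleGraph

variable {V : Type*} [Fintype V] [DecidableEq V]

private lemma reach_of_insert {A : Finset (Sym2 V)} {a b : V}
    (hr : (SimpleGraph.fromEdgeSet (↑A : Set (Sym2 V))).Reachable a b) {c d : V}
    (h : (SimpleGraph.fromEdgeSet (↑(insert s(a,b) A) : Set (Sym2 V))).Reachable c d) :
    (SimpleGraph.fromEdgeSet (↑A : Set (Sym2 V))).Reachable c d := by
  obtain ⟨w⟩ := h
  induction w with
  | nil => exact Reachable.refl _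
  | @cons c c' d h p ih =>
    refine Reachable.trans ?_ ih
    rw [fromEdgeSet_adj, Finset.coe_insert, Set.mem_insert_iff] at h
    obtain ⟨h1 | h1, hne⟩ := h
    · rw [Sym2.eq_iff] at h1
      rcases h1 with ⟨rfl, rfl⟩ | ⟨rfl, rfl⟩
      · exact hr
      · exact hr.symm
    · exact Adj.reachable ((fromEdgeSet_adj _).mpr ⟨h1, hne⟩)

private lemma reach_insert_cases {A : Finset (Sym2 V)} {a b : V} {c d : V}
    (h : (SimpleGraph.fromEdgeSet (↑(insert s(a,b) A) : Set (Sym2 V))).Reachable c d) :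
    (SimpleGraph.fromEdgeSet (↑A : Set (Sym2 V))).Reachable c d ∨
    ((SimpleGraph.fromEdgeSet (↑A : Set (Sym2 V))).Reachable c a ∧
      (SimpleGraph.fromEdgeSet (↑A : Set (Sym2 V))).Reachable b d) ∨
    ((SimpleGraph.fromEdgeSet (↑A : Set (Sym2 V))).Reachable c b ∧
      (SimpleGraph.fromEdgeSet (↑A : Set (Sym2 V))).Reachable a d) := by
  obtain ⟨w⟩ := h
  induction w with
  | nil => exact Or.inl (Reachable.refl _)
  | @cons c c' d h p ih =>
    rw [fromEdgeSet_adj, Finset.coe_insert, Set.mem_insert_iff] at h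
    obtain ⟨h1 | h1, hne⟩ := h
    · rw [Sym2.eq_iff] at h1
      rcases h1 with ⟨rfl, rfl⟩ | ⟨rfl, rfl⟩
      · rcases ih with h2 | ⟨h2, h3⟩ | ⟨h2, h3⟩
        · exact Or.inr (Or.inl ⟨Reachable.refl _, h2⟩)
        · exact Or.inl (h2.symm.trans h3)
        · exact Or.inl h3
      · rcases ih with h2 | ⟨h2, h3⟩ | ⟨h2, h3⟩
        · exact Or.inr (Or.inr ⟨Reachable.refl _, h2⟩)
        · exact Or.inl h3
        · exact Or.inr (Or.inr ⟨Reachable.refl _, h3⟩)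
    · have hcc : (SimpleGraph.fromEdgeSet (↑A : Set (Sym2 V))).Reachable c c' :=
        Adj.reachable ((fromEdgeSet_adj _).mpr ⟨h1, hne⟩)
      rcases ih with h2 | ⟨h2, h3⟩ | ⟨h2, h3⟩
      · exact Or.inl (hcc.trans h2)
      · exact Or.inr (Or.inl ⟨hcc.trans h2, h3⟩)
      · exact Or.inr (Or.inr ⟨hcc.trans h2, h3⟩)

private lemma card_cc_insert_reach {A : Finset (Sym2 V)} {a b : V}
    (hr : (SimpleGraph.fromEdgeSet (↑A : Set (Sym2 V))).Reachable a b) :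
    Nat.card (SimpleGraph.fromEdgeSet (↑(insert s(a,b) A) : Set (Sym2 V))).ConnectedComponent
      = Nat.card (SimpleGraph.fromEdgeSet (↑A : Set (Sym2 V))).ConnectedComponent := by
  refine Nat.card_congr (Quot.congrRight fun c d => ?_)
  constructor
  · exact reach_of_insert hr
  · exact fun h => h.mono (fromEdgeSet_mono (by simp [Finset.coe_insert, Set.subset_insert]))

set_option maxHeartbeats 800000 in
private lemma card_cc_insert_not_reach {A : Finset (Sym2 V)} {a b : V} (hab : a ≠ b)
    (hnr : ¬ (SimpleGraph.fromEdgeSet (↑A : Set (Sym2 V))).Reachable a b) :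
    Nat.card (SimpleGraph.fromEdgeSet (↑A : Set (Sym2 V))).ConnectedComponent
      = Nat.card
          (SimpleGraph.fromEdgeSet (↑(insert s(a,b) A) : Set (Sym2 V))).ConnectedComponent
        + 1 := by
  set G : SimpleGraph V := SimpleGraph.fromEdgeSet (↑A : Set (Sym2 V)) with hG
  set G' : SimpleGraph V := SimpleGraph.fromEdgeSet (↑(insert s(a,b) A) : Set (Sym2 V)) with hG'
  have hle : G ≤ G' := fromEdgeSet_mono (by simp [Finset.coe_insert, Set.subset_insert])
  have hadj : G'.Adj a b := (fromEdgeSet_adj _).mpr (by simp [hab])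
  set φ : G.ConnectedComponent → G'.ConnectedComponent :=
    ConnectedComponent.map (Hom.ofLE hle) with hφ
  have hφmk : ∀ v : V, φ (G.connectedComponentMk v) = G'.connectedComponentMk v := fun v => rfl
  set ψ : {c : G.ConnectedComponent // c ≠ G.connectedComponentMk b} → G'.ConnectedComponent :=
    fun c => φ c.1 with hψ
  have hbij : Function.Bijective ψ := by
    constructor
    · rintro ⟨c, hc⟩ ⟨c', hc'⟩ h
      induction c using ConnectedComponent.ind with | _ xx =>
      induction c' using ConnectedComponent.ind with | _ y =>
      simp only [hψ, hφmk, ConnectedComponent.eq] at h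
      rcases reach_insert_cases h with h2 | ⟨h2, h3⟩ | ⟨h2, h3⟩
      · exact Subtype.ext (ConnectedComponent.sound h2)
      · exact absurd (ConnectedComponent.sound h3.symm) hc'
      · exact absurd (ConnectedComponent.sound h2) hc
    · intro d
      induction d using ConnectedComponent.ind with | _ z =>
      by_cases hz : G.connectedComponentMk z = G.connectedComponentMk b
      · refine ⟨⟨G.connectedComponentMk a, fun h => hnr (ConnectedComponent.exact h)⟩, ?_⟩
        have hzb : G.Reachable z b := ConnectedComponent.exact hz
        simp only [hψ, hφmk, ConnectedComponent.eq]
        exact (hadj.reachable).trans (hzb.mono hle).symm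
      · exact ⟨⟨G.connectedComponentMk z, hz⟩, rfl⟩
  have h1 : Nat.card G'.ConnectedComponent
      = Nat.card {c : G.ConnectedComponent // c ≠ G.connectedComponentMk b} :=
    (Nat.card_eq_of_bijective ψ hbij).symm
  have h2 : Nat.card G.ConnectedComponent
      = Nat.card {c : G.ConnectedComponent // c ≠ G.connectedComponentMk b} + 1 := by
    rw [← Finite.card_option]
    exact Nat.card_congr (Equiv.optionSubtypeNe (G.connectedComponentMk b)).symm
  rw [h1, h2]

end AuxGraph

/-- The degree of a vertex `x` in the spanning subgraph `(V, A)`: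
the number of edges of `A` incident to `x`. -/
def degA {V : Type*} [DecidableEq V] (A : Finset (Sym2 V)) (x : V) : ℕ :=
  (A.filter fun e => x ∈ e).card

/-- `(A, u, v)` belongs to the worm state space `S(G)`: `A` is a set of edges of `G`
whose odd-degree vertices are exactly `{u, v}` when `u ≠ v`, and none when `u = v`. -/
def SGstate {V : Type*} [DecidableEq V] (G : SimpleGraph V) [DecidableRel G.Adj] [Fintype V]
    (A : Finset (Sym2 V)) (u v : V) : Prop :=
  A ⊆ G.edgeFinset ∧ ∀ x, Odd (degA A x) ↔ (u ≠ v ∧ (x = u ∨ x = v))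

/-- The cyclomatic number `c(A) = |A| - |V| + k(A)` of the spanning subgraph `(V, A)`. -/
noncomputable def cyc {V : Type*} [Fintype V] [DecidableEq V] (A : Finset (Sym2 V)) : ℤ :=
  (A.card : ℤ) - Fintype.card V +
    Nat.card (SimpleGraph.fromEdgeSet (↑A : Set (Sym2 V))).ConnectedComponent

/-- The worm stationary weight `π(A, u, v) = d_u d_v n^{c(A)} x^{|A|}`. -/
noncomputable def wormWeight {V : Type*} [Fintype V] [DecidableEq V]
    (G : SimpleGraph V) [DecidableRel G.Adj] (n x : ℝ)
    (p : Finset (Sym2 V) × V × V) : ℝ :=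
  (G.degree p.2.1 : ℝ) * (G.degree p.2.2 : ℝ) * n ^ cyc p.1 * x ^ p.1.card

/-- The Metropolis acceptance factor for toggling the edge `ab` of the bond
configuration `A`. -/
noncomputable def mrate {V : Type*} [DecidableEq V] (n x : ℝ)
    (A : Finset (Sym2 V)) (a b : V) : ℝ :=
  if s(a, b) ∉ A then
    if (SimpleGraph.fromEdgeSet (↑A : Set (Sym2 V))).Reachable a b then min 1 (x * n)
    else min 1 x
  else
    if (SimpleGraph.fromEdgeSet (↑(A.erase s(a, b)) : Set (Sym2 V))).Reachable a b then
      min 1 (1 / (n * x))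
    else min 1 (1 / x)

/-- The off-diagonal part of the simple worm transition matrix: the defect `u` (resp. `v`)
moves to a neighbour `u'` (resp. `v'`) by toggling the traversed edge, with probability
`(1/(2 d_u)) ⋅ m`. -/
noncomputable def wormOff {V : Type*} [Fintype V] [DecidableEq V]
    (G : SimpleGraph V) [DecidableRel G.Adj] (n x : ℝ)
    (p q : Finset (Sym2 V) × V × V) : ℝ :=
  (if G.Adj p.2.1 q.2.1 ∧ q.2.2 = p.2.2 ∧ q.1 = symmDiff p.1 {s(p.2.1, q.2.1)} then
    (1 / (2 * (G.degree p.2.1 : ℝ))) * mrate n x p.1 p.2.1 q.2.1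
  else 0) +
  (if G.Adj p.2.2 q.2.2 ∧ q.2.1 = p.2.1 ∧ q.1 = symmDiff p.1 {s(p.2.2, q.2.2)} then
    (1 / (2 * (G.degree p.2.2 : ℝ))) * mrate n x p.1 p.2.2 q.2.2
  else 0)

/-- The simple worm transition matrix: off-diagonal entries are as in `wormOff`, and the
diagonal entries are fixed by normalization of the rows. -/
noncomputable def wormP {V : Type*} [Fintype V] [DecidableEq V]
    (G : SimpleGraph V) [DecidableRel G.Adj] (n x : ℝ)
    (p q : Finset (Sym2 V) × V × V) : ℝ :=
  if q = p then 1 - ∑ r : Finset (Sym2 V) × V × V, wormOff G n x p r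
  else wormOff G n x p q


section Aux2
open SimpleGraph
variable {V : Type*} [Fintype V] [DecidableEq V]

private lemma symmDiff_singleton_not_mem {A : Finset (Sym2 V)} {e : Sym2 V} (he : e ∉ A) :
    symmDiff A {e} = insert e A := by
  ext f
  rcases eq_or_ne f e with rfl | h
  · simp [Finset.mem_symmDiff, he]
  · simp [Finset.mem_symmDiff, h]

private lemma symmDiff_singleton_mem {A : Finset (Sym2 V)} {e : Sym2 V} (he : e ∈ A) :
    symmDiff A {e} = A.erase e := by
  ext f
  rcases eq_or_ne f e with rfl | h
  · simp [Finset.mem_symmDiff, he]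
  · simp [Finset.mem_symmDiff, h]

private lemma cyc_insert {A : Finset (Sym2 V)} {a b : V} (hab : a ≠ b) (he : s(a,b) ∉ A) :
    cyc (insert s(a,b) A)
      = if (SimpleGraph.fromEdgeSet (↑A : Set (Sym2 V))).Reachable a b then cyc A + 1
        else cyc A := by
  unfold cyc
  rw [Finset.card_insert_of_notMem he]
  split_ifs with hr
  · rw [card_cc_insert_reach hr]; push_cast; ring
  · rw [card_cc_insert_not_reach hab hr]; push_cast; ring

private lemma mrate_nonneg {A : Finset (Sym2 V)} {a b : V} {n x : ℝ} (hn : 0 < n) (hx : 0 < x) :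
    0 ≤ mrate n x A a b := by
  unfold mrate
  split_ifs <;> positivity

private lemma mrate_le_one {A : Finset (Sym2 V)} {a b : V} {n x : ℝ} :
    mrate n x A a b ≤ 1 := by
  unfold mrate
  split_ifs <;> exact min_le_left _ _

private lemma core_bal {A : Finset (Sym2 V)} {a b : V} {n x : ℝ} (hn : 0 < n) (hx : 0 < x)
    (hab : a ≠ b) (he : s(a,b) ∉ A) :
    n ^ cyc A * x ^ A.card * mrate n x A a b
      = n ^ cyc (insert s(a,b) A) * x ^ (insert s(a,b) A).card
          * mrate n x (insert s(a,b) A) b a := by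
  have hswap : s(b,a) = s(a,b) := Sym2.eq_swap
  have herase : (insert s(a,b) A).erase s(b,a) = A := by rw [hswap]; exact Finset.erase_insert he
  have hmem : ¬ (s(b,a) ∉ insert s(a,b) A) := by rw [hswap]; simp
  rw [mrate, mrate, if_pos he, if_neg hmem, herase,
    cyc_insert hab he, Finset.card_insert_of_notMem he]
  by_cases hr : (SimpleGraph.fromEdgeSet (↑A : Set (Sym2 V))).Reachable a b
  · rw [if_pos hr, if_pos hr, if_pos hr.symm, zpow_add_one₀ (ne_of_gt hn), pow_succ]
    have hkey : min 1 (x*n) = n * x * min 1 (1/(n*x)) := by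
      rcases le_total (x*n) 1 with h | h
      · rw [min_eq_right h, min_eq_left (one_le_one_div (by positivity) (by linarith))]
        ring
      · rw [min_eq_left h, min_eq_right ((div_le_one (by positivity)).mpr (by linarith))]
        field_simp
    rw [hkey]; ring
  · have hr' : ¬ (SimpleGraph.fromEdgeSet (↑A : Set (Sym2 V))).Reachable b a :=
      fun h => hr h.symm
    rw [if_neg hr, if_neg hr, if_neg hr', pow_succ]
    have hkey : min 1 x = x * min 1 (1/x) := by
      rcases le_total x 1 with h | h
      · rw [min_eq_right h, min_eq_left (one_le_one_div hx h)]; ring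
      · rw [min_eq_left h, min_eq_right ((div_le_one hx).mpr h)]
        field_simp
    rw [hkey]; ring

private lemma flip_bal {A : Finset (Sym2 V)} {a b : V} {n x : ℝ} (hn : 0 < n) (hx : 0 < x)
    (hab : a ≠ b) :
    n ^ cyc A * x ^ A.card * mrate n x A a b
      = n ^ cyc (symmDiff A {s(a,b)}) * x ^ (symmDiff A {s(a,b)}).card
          * mrate n x (symmDiff A {s(a,b)}) b a := by
  by_cases he : s(a,b) ∈ A
  · rw [symmDiff_singleton_mem he]
    have hswap : s(b,a) = s(a,b) := Sym2.eq_swap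
    have h2 : s(b,a) ∉ A.erase s(a,b) := by rw [hswap]; exact Finset.notMem_erase _ _
    have := (core_bal hn hx hab.symm h2).symm
    rwa [hswap, Finset.insert_erase he] at this
  · rw [symmDiff_singleton_not_mem he]
    exact core_bal hn hx hab he

end Aux2


section Aux3
open SimpleGraph
variable {V : Type*} [Fintype V] [DecidableEq V]

private lemma hsum1 (G : SimpleGraph V) [DecidableRel G.Adj] (u v : V) (A : Finset (Sym2 V))
    (c : V → ℝ) :
    ∑ r : Finset (Sym2 V) × V × V,
        (if G.Adj u r.2.1 ∧ r.2.2 = v ∧ r.1 = symmDiff A {s(u, r.2.1)} then c r.2.1 else 0)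
      = ∑ w : V, if G.Adj u w then c w else 0 := by
  classical
  rw [Fintype.sum_prod_type, Finset.sum_comm, Fintype.sum_prod_type]
  refine Finset.sum_congr rfl fun w _ => ?_
  have h3 : ∀ (z : V) (B : Finset (Sym2 V)),
      (if G.Adj u w ∧ z = v ∧ B = symmDiff A {s(u, w)} then c w else 0)
        = if B = symmDiff A {s(u, w)} then (if z = v then (if G.Adj u w then c w else 0) else 0)
          else 0 := by
    intro z B
    by_cases h1 : G.Adj u w <;> by_cases h2 : z = v <;>
      by_cases h4 : B = symmDiff A {s(u, w)} <;> simp [h1, h2, h4]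
  simp only [h3]
  have h5 : ∀ z : V, (∑ B : Finset (Sym2 V),
      if B = symmDiff A {s(u, w)} then (if z = v then (if G.Adj u w then c w else 0) else 0)
        else 0) = if z = v then (if G.Adj u w then c w else 0) else 0 := by
    intro z
    rw [Finset.sum_ite_eq']
    simp
  simp only [h5]
  rw [Finset.sum_ite_eq']
  simp

private lemma hsum2 (G : SimpleGraph V) [DecidableRel G.Adj] (u v : V) (A : Finset (Sym2 V))
    (c : V → ℝ) :
    ∑ r : Finset (Sym2 V) × V × V,
        (if G.Adj v r.2.2 ∧ r.2.1 = u ∧ r.1 = symmDiff A {s(v, r.2.2)} then c r.2.2 else 0)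
      = ∑ z : V, if G.Adj v z then c z else 0 := by
  classical
  rw [Fintype.sum_prod_type, Finset.sum_comm, Fintype.sum_prod_type, Finset.sum_comm]
  refine Finset.sum_congr rfl fun z _ => ?_
  have h3 : ∀ (w : V) (B : Finset (Sym2 V)),
      (if G.Adj v z ∧ w = u ∧ B = symmDiff A {s(v, z)} then c z else 0)
        = if B = symmDiff A {s(v, z)} then (if w = u then (if G.Adj v z then c z else 0) else 0)
          else 0 := by
    intro w B
    by_cases h1 : G.Adj v z <;> by_cases h2 : w = u <;>
      by_cases h4 : B = symmDiff A {s(v, z)} <;> simp [h1, h2, h4]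
  simp only [h3]
  have h5 : ∀ w : V, (∑ B : Finset (Sym2 V),
      if B = symmDiff A {s(v, z)} then (if w = u then (if G.Adj v z then c z else 0) else 0)
        else 0) = if w = u then (if G.Adj v z then c z else 0) else 0 := by
    intro w
    rw [Finset.sum_ite_eq']
    simp
  simp only [h5]
  rw [Finset.sum_ite_eq']
  simp

private lemma half_bound (G : SimpleGraph V) [DecidableRel G.Adj] {n x : ℝ}
    (hn : 0 < n) (hx : 0 < x) (u : V) (A : Finset (Sym2 V)) :
    ∑ w : V, (if G.Adj u w then 1 / (2 * (G.degree u : ℝ)) * mrate n x A u w else 0) ≤ 1 / 2 := by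
  classical
  by_cases hd : G.degree u = 0
  · have hne : ∀ w, ¬ G.Adj u w := by
      intro w hw
      have : w ∈ G.neighborFinset u := (SimpleGraph.mem_neighborFinset _ _ _).mpr hw
      simp [SimpleGraph.degree, Finset.card_eq_zero.mp hd] at this
    simp only [hne, if_false]
    norm_num
  · have hdpos : (0:ℝ) < (G.degree u : ℝ) := by exact_mod_cast Nat.pos_of_ne_zero hd
    calc ∑ w : V, (if G.Adj u w then 1 / (2 * (G.degree u : ℝ)) * mrate n x A u w else 0)
        ≤ ∑ w : V, (if G.Adj u w then 1 / (2 * (G.degree u : ℝ)) else 0) := by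
          refine Finset.sum_le_sum fun w _ => ?_
          split_ifs with h
          · exact mul_le_of_le_one_right (by positivity) mrate_le_one
          · exact le_refl _
      _ = (G.degree u : ℝ) * (1 / (2 * (G.degree u : ℝ))) := by
          rw [Finset.sum_ite, Finset.sum_const, Finset.sum_const_zero, add_zero,
            nsmul_eq_mul]
          congr 2
          rw [← SimpleGraph.card_neighborFinset_eq_degree]
          congr 1
          ext w
          simp [SimpleGraph.mem_neighborFinset]
      _ = 1 / 2 := by
          have h0 : (G.degree u : ℝ) ≠ 0 := ne_of_gt hdpos
          field_simp

end Aux3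

theorem worm_transition_matrix_detailed_balance
    {V : Type*} [Fintype V] [DecidableEq V]
    (G : SimpleGraph V) [DecidableRel G.Adj]
    (n x : ℝ) (hn : 0 < n) (hx : 0 < x) :
    (∀ p q, 0 ≤ wormP G n x p q) ∧
    (∀ p, ∑ q, wormP G n x p q = 1) ∧
    (∀ p q : Finset (Sym2 V) × V × V,
      SGstate G p.1 p.2.1 p.2.2 → SGstate G q.1 q.2.1 q.2.2 →
      wormWeight G n x p * wormP G n x p q = wormWeight G n x q * wormP G n x q p) := by
  classical
  have hoff_nonneg : ∀ p q : Finset (Sym2 V) × V × V, 0 ≤ wormOff G n x p q := by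
    intro p q
    unfold wormOff
    have key : ∀ (a b : V) (A : Finset (Sym2 V)),
        0 ≤ 1 / (2 * (G.degree a : ℝ)) * mrate n x A a b := fun a b A =>
      mul_nonneg (by positivity) (mrate_nonneg hn hx)
    refine add_nonneg ?_ ?_ <;> split_ifs <;> first | apply key | exact le_refl _
  have hsum_off : ∀ p : Finset (Sym2 V) × V × V,
      ∑ r : Finset (Sym2 V) × V × V, wormOff G n x p r ≤ 1 := by
    intro p
    unfold wormOff
    rw [Finset.sum_add_distrib,
      hsum1 G p.2.1 p.2.2 p.1 (fun w => 1 / (2 * (G.degree p.2.1 : ℝ)) * mrate n x p.1 p.2.1 w),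
      hsum2 G p.2.1 p.2.2 p.1 (fun w => 1 / (2 * (G.degree p.2.2 : ℝ)) * mrate n x p.1 p.2.2 w)]
    have b1 := half_bound G hn hx p.2.1 p.1
    have b2 := half_bound G hn hx p.2.2 p.1
    linarith
  have hzero : ∀ p : Finset (Sym2 V) × V × V, wormOff G n x p p = 0 := by
    intro p
    unfold wormOff
    rw [if_neg (fun h => G.irrefl h.1), if_neg (fun h => G.irrefl h.1), add_zero]
  refine ⟨?_, ?_, ?_⟩
  · intro p q
    unfold wormP
    split_ifs with h
    · have := hsum_off p
      linarith
    · exact hoff_nonneg p q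
  · intro p
    rw [← Finset.add_sum_erase _ _ (Finset.mem_univ p)]
    have h1 : wormP G n x p p = 1 - ∑ r : Finset (Sym2 V) × V × V, wormOff G n x p r := by
      unfold wormP; rw [if_pos rfl]
    have h2 : ∑ q ∈ Finset.univ.erase p, wormP G n x p q
        = ∑ q ∈ Finset.univ.erase p, wormOff G n x p q :=
      Finset.sum_congr rfl fun q hq => by unfold wormP; rw [if_neg (Finset.ne_of_mem_erase hq)]
    rw [h1, h2, Finset.sum_erase _ (hzero p)]
    ring
  · have hbal : ∀ p q : Finset (Sym2 V) × V × V,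
        wormWeight G n x p * wormOff G n x p q = wormWeight G n x q * wormOff G n x q p := by
      rintro ⟨A, u, v⟩ ⟨B, u₂, v₂⟩
      unfold wormOff wormWeight
      dsimp only
      rw [mul_add, mul_add]
      congr 1
      · by_cases hc : G.Adj u u₂ ∧ v₂ = v ∧ B = symmDiff A {s(u, u₂)}
        · obtain ⟨hadj, h1, h2⟩ := hc
          subst h1
          subst h2
          rw [if_pos ⟨hadj, rfl, rfl⟩,
            if_pos ⟨hadj.symm, rfl, by rw [Sym2.eq_swap, symmDiff_symmDiff_cancel_right]⟩]
          have hdu : ((G.degree u : ℝ)) ≠ 0 := by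
            have : 0 < G.degree u := by
              rw [← SimpleGraph.card_neighborFinset_eq_degree]
              exact Finset.card_pos.mpr ⟨u₂, (SimpleGraph.mem_neighborFinset _ _ _).mpr hadj⟩
            positivity
          have hdu₂ : ((G.degree u₂ : ℝ)) ≠ 0 := by
            have : 0 < G.degree u₂ := by
              rw [← SimpleGraph.card_neighborFinset_eq_degree]
              exact Finset.card_pos.mpr
                ⟨u, (SimpleGraph.mem_neighborFinset _ _ _).mpr hadj.symm⟩
            positivity
          have hflip := flip_bal (A := A) hn hx (G.ne_of_adj hadj)
          calc (G.degree u : ℝ) * (G.degree v₂ : ℝ) * n ^ cyc A * x ^ A.card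
                * (1 / (2 * (G.degree u : ℝ)) * mrate n x A u u₂)
              = (G.degree v₂ : ℝ) * (n ^ cyc A * x ^ A.card * mrate n x A u u₂) / 2 := by
                field_simp [hdu]
            _ = (G.degree v₂ : ℝ) * (n ^ cyc (symmDiff A {s(u, u₂)})
                  * x ^ (symmDiff A {s(u, u₂)}).card
                  * mrate n x (symmDiff A {s(u, u₂)}) u₂ u) / 2 := by rw [hflip]
            _ = (G.degree u₂ : ℝ) * (G.degree v₂ : ℝ) * n ^ cyc (symmDiff A {s(u, u₂)})
                * x ^ (symmDiff A {s(u, u₂)}).card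
                * (1 / (2 * (G.degree u₂ : ℝ)) * mrate n x (symmDiff A {s(u, u₂)}) u₂ u) := by
                field_simp [hdu₂]
        · rw [if_neg hc, if_neg, mul_zero, mul_zero]
          rintro ⟨h1, h2, h3⟩
          exact hc ⟨h1.symm, h2.symm, by
            rw [h3, Sym2.eq_swap, symmDiff_symmDiff_cancel_right]⟩
      · by_cases hc : G.Adj v v₂ ∧ u₂ = u ∧ B = symmDiff A {s(v, v₂)}
        · obtain ⟨hadj, h1, h2⟩ := hc
          subst h1
          subst h2
          rw [if_pos ⟨hadj, rfl, rfl⟩,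
            if_pos ⟨hadj.symm, rfl, by rw [Sym2.eq_swap, symmDiff_symmDiff_cancel_right]⟩]
          have hdv : ((G.degree v : ℝ)) ≠ 0 := by
            have : 0 < G.degree v := by
              rw [← SimpleGraph.card_neighborFinset_eq_degree]
              exact Finset.card_pos.mpr ⟨v₂, (SimpleGraph.mem_neighborFinset _ _ _).mpr hadj⟩
            positivity
          have hdv₂ : ((G.degree v₂ : ℝ)) ≠ 0 := by
            have : 0 < G.degree v₂ := by
              rw [← SimpleGraph.card_neighborFinset_eq_degree]
              exact Finset.card_pos.mpr
                ⟨v, (SimpleGraph.mem_neighborFinset _ _ _).mpr hadj.symm⟩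
            positivity
          have hflip := flip_bal (A := A) hn hx (G.ne_of_adj hadj)
          calc (G.degree u₂ : ℝ) * (G.degree v : ℝ) * n ^ cyc A * x ^ A.card
                * (1 / (2 * (G.degree v : ℝ)) * mrate n x A v v₂)
              = (G.degree u₂ : ℝ) * (n ^ cyc A * x ^ A.card * mrate n x A v v₂) / 2 := by
                field_simp [hdv]
            _ = (G.degree u₂ : ℝ) * (n ^ cyc (symmDiff A {s(v, v₂)})
                  * x ^ (symmDiff A {s(v, v₂)}).card
                  * mrate n x (symmDiff A {s(v, v₂)}) v₂ v) / 2 := by rw [hflip]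
            _ = (G.degree u₂ : ℝ) * (G.degree v₂ : ℝ) * n ^ cyc (symmDiff A {s(v, v₂)})
                * x ^ (symmDiff A {s(v, v₂)}).card
                * (1 / (2 * (G.degree v₂ : ℝ)) * mrate n x (symmDiff A {s(v, v₂)}) v₂ v) := by
                field_simp
        · rw [if_neg hc, if_neg, mul_zero, mul_zero]
          rintro ⟨h1, h2, h3⟩
          exact hc ⟨h1.symm, h2.symm, by
            rw [h3, Sym2.eq_swap, symmDiff_symmDiff_cancel_right]⟩
    intro p q _ _
    by_cases hqp : q = p
    · subst hqp
      rfl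
    · unfold wormP
      rw [if_neg hqp, if_neg (fun h => hqp h.symm)]
      exact hbal p q
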